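/- Let (T,d) be a rooted real tree with root ρ and most recent common ancestor operation ∧. Define d^{(1)}(σ,σ') = log(d(ρ,σ)+1) + log(d(ρ,σ')+1) − 2 log(d(ρ, σ∧σ')+1). Then d^{(1)} is a metric on T. -/
import Mathlib


/- The distorted distance `d^{(1)}` on a rooted real tree. -/
noncomputable def distOne {T : Type*} [MetricSpace T] (ρ : T) (mrca : T → T → T)
    (σ σ' : T) : ℝ :=
  Real.log (dist ρ σ + 1) + Real.log (dist ρ σ' + 1)
    - 2 * Real.log (dist ρ (mrca σ σ') + 1)

/- Let `(T,d)` be a rooted real tree (a 0-hyperbolic geodesic metric space) with root `ρ`,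
where `mrca σ σ'` is the most recent common ancestor of `σ` and `σ'`: it lies on the
geodesics from `ρ` to `σ` and to `σ'`, and `d(ρ, σ ∧ σ')` equals the Gromov product of
`σ, σ'` at `ρ`. Then
`d^{(1)}(σ,σ') = log(d(ρ,σ)+1) + log(d(ρ,σ')+1) − 2 log(d(ρ, σ∧σ')+1)` is a metric on `T`. -/
theorem distOne_is_metric {T : Type*} [MetricSpace T] (ρ : T) (mrca : T → T → T)
    (hfour : ∀ x y z w : T,
      dist x y + dist z w ≤ max (dist x z + dist y w) (dist x w + dist y z))
    (hgromov : ∀ x y, dist ρ (mrca x y) = (dist ρ x + dist ρ y - dist x y) / 2)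
    (hgeo₁ : ∀ x y, dist ρ (mrca x y) + dist (mrca x y) x = dist ρ x)
    (hsymm : ∀ x y, mrca x y = mrca y x) :
    (∀ σ σ' : T, 0 ≤ distOne ρ mrca σ σ') ∧
    (∀ σ σ' : T, distOne ρ mrca σ σ' = 0 ↔ σ = σ') ∧
    (∀ σ σ' : T, distOne ρ mrca σ σ' = distOne ρ mrca σ' σ) ∧
    (∀ σ τ σ' : T, distOne ρ mrca σ σ' ≤ distOne ρ mrca σ τ + distOne ρ mrca τ σ') := by
  have hle : ∀ x y : T, dist ρ (mrca x y) ≤ dist ρ x := by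
    intro x y
    have h1 := hgeo₁ x y
    have h2 : (0:ℝ) ≤ dist (mrca x y) x := dist_nonneg
    linarith
  have hle' : ∀ x y : T, dist ρ (mrca x y) ≤ dist ρ y := by
    intro x y; rw [hsymm]; exact hle y x
  have hlog : ∀ x y : ℝ, 0 ≤ x → x ≤ y → Real.log (x + 1) ≤ Real.log (y + 1) := by
    intro x y hx hxy
    exact Real.log_le_log (by linarith) (by linarith)
  have hnn : ∀ σ σ' : T, 0 ≤ distOne ρ mrca σ σ' := by
    intro σ σ'
    have h1 := hlog (dist ρ (mrca σ σ')) (dist ρ σ) dist_nonneg (hle σ σ')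
    have h2 := hlog (dist ρ (mrca σ σ')) (dist ρ σ') dist_nonneg (hle' σ σ')
    simp only [distOne]
    linarith
  refine ⟨hnn, ?_, ?_, ?_⟩
  · intro σ σ'
    constructor
    · intro h
      simp only [distOne] at h
      have h1 := hlog (dist ρ (mrca σ σ')) (dist ρ σ) dist_nonneg (hle σ σ')
      have h2 := hlog (dist ρ (mrca σ σ')) (dist ρ σ') dist_nonneg (hle' σ σ')
      have hm1 : (0:ℝ) < dist ρ (mrca σ σ') + 1 := by
        have : (0:ℝ) ≤ dist ρ (mrca σ σ') := dist_nonneg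
        linarith
      have d1 : dist ρ σ = dist ρ (mrca σ σ') := by
        rcases lt_or_eq_of_le (hle σ σ') with hlt | heq
        · exfalso
          have := Real.log_lt_log hm1 (by linarith : dist ρ (mrca σ σ') + 1 < dist ρ σ + 1)
          linarith
        · exact heq.symm
      have d2 : dist ρ σ' = dist ρ (mrca σ σ') := by
        rcases lt_or_eq_of_le (hle' σ σ') with hlt | heq
        · exfalso
          have := Real.log_lt_log hm1 (by linarith : dist ρ (mrca σ σ') + 1 < dist ρ σ' + 1)
          linarith
        · exact heq.symm
      have e1 : dist (mrca σ σ') σ = 0 := by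
        have := hgeo₁ σ σ'; linarith
      have e2 : dist (mrca σ σ') σ' = 0 := by
        have := hgeo₁ σ' σ; rw [hsymm σ' σ] at this; linarith
      have f1 : σ = mrca σ σ' := (dist_eq_zero.mp e1).symm
      have f2 : σ' = mrca σ σ' := (dist_eq_zero.mp e2).symm
      exact f1.trans f2.symm
    · intro h
      subst h
      have : dist ρ (mrca σ σ) = dist ρ σ := by
        rw [hgromov σ σ, dist_self]; ring
      simp only [distOne, this]; ring
  · intro σ σ'
    simp only [distOne, hsymm σ σ']; ring
  · intro σ τ σ'
    simp only [distOne]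
    set a := dist ρ (mrca σ τ) with ha
    set b := dist ρ (mrca τ σ') with hb
    set c := dist ρ (mrca σ σ') with hc
    have key : a ≤ c ∨ b ≤ c := by
      have h4 := hfour σ σ' τ ρ
      have ga := hgromov σ τ
      have gb := hgromov τ σ'
      have gc := hgromov σ σ'
      have c1 : dist τ ρ = dist ρ τ := dist_comm τ ρ
      have c2 : dist σ' ρ = dist ρ σ' := dist_comm σ' ρ
      have c3 : dist σ ρ = dist ρ σ := dist_comm σ ρ
      have c4 : dist σ' τ = dist τ σ' := dist_comm σ' τ
      rcases le_max_iff.mp h4 with h | h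
      · left; rw [ha, hc]; linarith
      · right; rw [hb, hc]; linarith
    have hta : a ≤ dist ρ τ := hle' σ τ
    have htb : b ≤ dist ρ τ := hle τ σ'
    rcases key with h | h
    · have l1 := hlog a c dist_nonneg h
      have l2 := hlog b (dist ρ τ) dist_nonneg htb
      linarith
    · have l1 := hlog b c dist_nonneg h
      have l2 := hlog a (dist ρ τ) dist_nonneg hta
      linarith
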